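/- In the case n = 1 with weight w(p) = 1/(1 + p²) instead of 1/E(p), the constant function φ(p) ≡ 1 belongs to L²(ℝ, w dp) and lies in H_S ∩ H_T for S = (0,1) and T = (−1,0); in particular disjoint sets can fail to have trivial intersection of spectral subspaces for more rapidly decreasing weights. -/

import Mathlib

open MeasureTheory FourierTransform

noncomputable section

/-- The weighted `L²` norm `(∫ |φ(p)|² w(p) dp)^{1/2}` on `ℝ`. -/
def wnorm (w : ℝ → ℝ) (φ : ℝ → ℂ) : ℝ :=
  Real.sqrt (∫ p, ‖φ p‖ ^ 2 * w p)

/-- Membership in the weighted space `L²(ℝ, w dp)`. -/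
def MemL2w (w : ℝ → ℝ) (φ : ℝ → ℂ) : Prop :=
  AEStronglyMeasurable φ volume ∧ Integrable (fun p => ‖φ p‖ ^ 2 * w p)

/-- `φ ∈ H_S` for the weighted space: `φ` is a limit, in the `w`-weighted `L²` norm, of
Fourier transforms of square-integrable (and integrable, a dense subclass with the same
closure) functions supported in `S`. -/
def MemHSw (w : ℝ → ℝ) (S : Set ℝ) (φ : ℝ → ℂ) : Prop :=
  MemL2w w φ ∧
    ∃ ψ : ℕ → ℝ → ℂ,
      (∀ k, Integrable (ψ k) ∧ MemLp (ψ k) 2 volume ∧ ∀ᵐ p, p ∉ S → ψ k p = 0) ∧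
      Filter.Tendsto (fun k => wnorm w (fun p => 𝓕 (ψ k) p - φ p)) Filter.atTop (nhds 0)

open Filter Real Set

lemma fourier_indicator_sub_one (a b : ℝ) (hab : a < b) (p : ℝ) :
    𝓕 (Set.indicator (Set.Ioo a b) (fun _ => ((b - a : ℝ) : ℂ)⁻¹)) p - 1
      = ∫ v in Set.Ioo a b,
          ((𝐞 (-(v * p)) : ℂ) * ((b - a : ℝ) : ℂ)⁻¹ - ((b - a : ℝ) : ℂ)⁻¹) := by
  have hba : (b - a : ℝ) ≠ 0 := sub_ne_zero.2 hab.ne'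
  have h1 : (1 : ℂ) = ∫ v in Set.Ioo a b, ((b - a : ℝ) : ℂ)⁻¹ := by
    rw [setIntegral_const, Real.volume_real_Ioo, max_eq_left (by linarith)]
    rw [Complex.real_smul]
    field_simp
    exact (div_self (by exact_mod_cast hba)).symm
  have h2 : 𝓕 (Set.indicator (Set.Ioo a b) (fun _ => ((b - a : ℝ) : ℂ)⁻¹)) p
      = ∫ v in Set.Ioo a b, (𝐞 (-(v * p)) : ℂ) * ((b - a : ℝ) : ℂ)⁻¹ := by
    rw [Real.fourier_real_eq]
    rw [← integral_indicator measurableSet_Ioo]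
    congr 1
    ext v
    by_cases hv : v ∈ Set.Ioo a b
    · simp [hv, Circle.smul_def]
    · simp [hv]
  rw [h2]
  conv_lhs => rw [h1]
  rw [← integral_sub]
  · exact (((continuous_subtype_val.comp (Real.continuous_fourierChar.comp
      (by fun_prop))).mul continuous_const).integrableOn_Icc).mono_set Set.Ioo_subset_Icc_self
  · exact integrableOn_const measure_Ioo_lt_top.ne

/-- norm bound on the character minus one -/
lemma fourierChar_sub_one_bound {θ : ℝ} (h : 2 * π * |θ| ≤ 1) :
    ‖(𝐞 θ : ℂ) - 1‖ ≤ 2 * (2 * π * |θ|) := by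
  rw [Real.fourierChar_apply]
  have := Complex.norm_exp_sub_one_le (x := (↑(2 * π * θ) * Complex.I)) (by
    simpa [abs_of_nonneg Real.pi_nonneg] using h)
  calc ‖Complex.exp (↑(2 * π * θ) * Complex.I) - 1‖
      ≤ 2 * ‖(↑(2 * π * θ) * Complex.I)‖ := this
    _ = 2 * (2 * π * |θ|) := by
        simp [abs_mul, abs_of_nonneg Real.pi_nonneg, mul_assoc]

lemma memL2w_one : MemL2w (fun p => 1 / (1 + p ^ 2)) (fun _ => (1 : ℂ)) := by
  refine ⟨aestronglyMeasurable_const, ?_⟩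
  simpa [one_div] using integrable_inv_one_add_sq

lemma memHSw_one (a b : ℕ → ℝ) (hab : ∀ k, a k < b k)
    (ha : Tendsto a atTop (nhds 0)) (hb : Tendsto b atTop (nhds 0))
    (S : Set ℝ) (hS : ∀ k, Set.Ioo (a k) (b k) ⊆ S) :
    MemHSw (fun p => 1 / (1 + p ^ 2)) S (fun _ => (1 : ℂ)) := by
  refine ⟨memL2w_one, ?_⟩
  set ψ : ℕ → ℝ → ℂ :=
    fun k => Set.indicator (Set.Ioo (a k) (b k)) (fun _ => ((b k - a k : ℝ) : ℂ)⁻¹) with hψ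
  have hba : ∀ k, (0:ℝ) < b k - a k := fun k => sub_pos.2 (hab k)
  have hint : ∀ k, Integrable (ψ k) := fun k =>
    (integrable_indicator_iff measurableSet_Ioo).2 (integrableOn_const measure_Ioo_lt_top.ne)
  -- L¹ norm is 1
  have hL1 : ∀ k, ∫ x, ‖ψ k x‖ = 1 := by
    intro k
    have : (fun x => ‖ψ k x‖)
        = Set.indicator (Set.Ioo (a k) (b k)) (fun _ => ‖((b k - a k : ℝ) : ℂ)⁻¹‖) := by
      ext x; by_cases hx : x ∈ Set.Ioo (a k) (b k) <;> simp [ψ, hx]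
    rw [this, integral_indicator_const _ measurableSet_Ioo, Real.volume_real_Ioo,
      max_eq_left (hba k).le, smul_eq_mul]
    rw [norm_inv, Complex.norm_real, Real.norm_eq_abs, abs_of_pos (hba k)]
    field_simp
    exact div_self (hba k).ne'
  -- pointwise convergence of the Fourier transforms
  have hM : Tendsto (fun k => max |a k| |b k|) atTop (nhds 0) := by
    simpa using (ha.abs.max hb.abs)
  have hpt : ∀ p : ℝ, Tendsto (fun k => ‖𝓕 (ψ k) p - 1‖) atTop (nhds 0) := by
    intro p
    have hMp : Tendsto (fun k => 2 * (2 * π * (max |a k| |b k| * |p|))) atTop (nhds 0) := by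
      have h0 : Tendsto (fun k => max |a k| |b k| * |p|) atTop (nhds 0) := by
        simpa using hM.mul_const |p|
      simpa using ((h0.const_mul (2 * π)).const_mul 2)
    apply squeeze_zero' (Eventually.of_forall fun k => norm_nonneg _) ?_ hMp
    have hev : ∀ᶠ k in atTop, 2 * π * (max |a k| |b k| * |p|) ≤ 1 := by
      refine Filter.Tendsto.eventually_le_const one_pos ?_
      have h0 : Tendsto (fun k => max |a k| |b k| * |p|) atTop (nhds 0) := by
        simpa using hM.mul_const |p|
      simpa using (h0.const_mul (2 * π))
    filter_upwards [hev] with k hk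
    set M := max |a k| |b k| with hMdef
    have hMnn : 0 ≤ M := le_trans (abs_nonneg _) (le_max_left _ _)
    rw [hψ, fourier_indicator_sub_one (a k) (b k) (hab k) p]
    have hbound : ∀ v ∈ Set.Ioo (a k) (b k),
        ‖(𝐞 (-(v * p)) : ℂ) * ((b k - a k : ℝ) : ℂ)⁻¹ - ((b k - a k : ℝ) : ℂ)⁻¹‖
          ≤ (2 * (2 * π * (M * |p|))) * (b k - a k)⁻¹ := by
      intro v hv
      have h1 : -|a k| ≤ a k := neg_abs_le _
      have h2 : b k ≤ |b k| := le_abs_self _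
      have h3 : |a k| ≤ M := le_max_left _ _
      have h4 : |b k| ≤ M := le_max_right _ _
      have hvM : |v| ≤ M := abs_le.2 ⟨by linarith [hv.1], by linarith [hv.2]⟩
      have habs : |(-(v * p))| ≤ M * |p| := by
        rw [abs_neg, abs_mul]
        exact mul_le_mul_of_nonneg_right hvM (abs_nonneg _)
      have key : ‖(𝐞 (-(v * p)) : ℂ) - 1‖ ≤ 2 * (2 * π * (M * |p|)) := by
        refine (fourierChar_sub_one_bound ?_).trans ?_
        · calc 2 * π * |(-(v * p))| ≤ 2 * π * (M * |p|) := by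
                have := Real.pi_pos; nlinarith
            _ ≤ 1 := hk
        · have := Real.pi_pos; nlinarith
      have heq : (𝐞 (-(v * p)) : ℂ) * ((b k - a k : ℝ) : ℂ)⁻¹ - ((b k - a k : ℝ) : ℂ)⁻¹
          = ((𝐞 (-(v * p)) : ℂ) - 1) * ((b k - a k : ℝ) : ℂ)⁻¹ := by ring
      rw [heq, norm_mul, norm_inv, Complex.norm_real, Real.norm_eq_abs,
        abs_of_pos (hba k)]
      exact mul_le_mul_of_nonneg_right key (inv_nonneg.2 (hba k).le)
    calc ‖∫ v in Set.Ioo (a k) (b k),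
            ((𝐞 (-(v * p)) : ℂ) * ((b k - a k : ℝ) : ℂ)⁻¹ - ((b k - a k : ℝ) : ℂ)⁻¹)‖
        ≤ (2 * (2 * π * (M * |p|))) * (b k - a k)⁻¹ * (volume (Set.Ioo (a k) (b k))).toReal :=
          norm_setIntegral_le_of_norm_le_const measure_Ioo_lt_top hbound
      _ = 2 * (2 * π * (M * |p|)) := by
          rw [Real.volume_Ioo, ENNReal.toReal_ofReal (hba k).le, mul_assoc,
            inv_mul_cancel₀ (hba k).ne', mul_one]
  -- continuity / measurability of the Fourier transforms
  have hcont : ∀ k, Continuous (𝓕 (ψ k)) := fun k =>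
    VectorFourier.fourierIntegral_continuous Real.continuous_fourierChar
      (by exact continuous_inner) (hint k)
  -- uniform bound ‖𝓕 (ψ k) p‖ ≤ 1
  have hFb : ∀ k p, ‖𝓕 (ψ k) p‖ ≤ 1 := by
    intro k p
    calc ‖𝓕 (ψ k) p‖ ≤ ∫ x, ‖ψ k x‖ :=
          VectorFourier.norm_fourierIntegral_le_integral_norm _ _ _ _ _
      _ = 1 := hL1 k
  -- dominated convergence for the weighted integrals
  have h_int : Tendsto (fun k => ∫ p, ‖𝓕 (ψ k) p - 1‖ ^ 2 * (1 / (1 + p ^ 2)))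
      atTop (nhds 0) := by
    have h0 : (0 : ℝ) = ∫ p : ℝ, (0 : ℝ) := by simp
    rw [h0]
    apply tendsto_integral_of_dominated_convergence
      (bound := fun p => 4 * (1 / (1 + p ^ 2)))
    · intro k
      have hwc : Continuous fun p : ℝ => 1 / (1 + p ^ 2) := by
        apply Continuous.div continuous_const (by fun_prop)
        intro p; positivity
      exact ((((hcont k).sub continuous_const).norm.pow 2).mul
        hwc).aestronglyMeasurable
    · simpa [one_div] using integrable_inv_one_add_sq.const_mul 4
    · intro k
      refine Eventually.of_forall fun p => ?_
      have hw : (0:ℝ) < 1 + p ^ 2 := by positivity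
      have hwnn : (0:ℝ) ≤ 1 / (1 + p ^ 2) := by positivity
      have hub : ‖𝓕 (ψ k) p - 1‖ ≤ 2 := by
        calc ‖𝓕 (ψ k) p - 1‖ ≤ ‖𝓕 (ψ k) p‖ + ‖(1:ℂ)‖ := norm_sub_le _ _
          _ ≤ 1 + 1 := by simpa using add_le_add_right (hFb k p) 1
          _ = 2 := by norm_num
      have hsq : ‖𝓕 (ψ k) p - 1‖ ^ 2 ≤ 4 := by nlinarith [norm_nonneg (𝓕 (ψ k) p - 1)]
      rw [Real.norm_eq_abs, abs_of_nonneg (by positivity)]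
      exact mul_le_mul_of_nonneg_right hsq hwnn
    · refine Eventually.of_forall fun p => ?_
      have := ((hpt p).pow 2).mul_const (1 / (1 + p ^ 2))
      simpa using this
  refine ⟨ψ, fun k => ⟨hint k, ?_, ?_⟩, ?_⟩
  · exact memLp_indicator_const 2 measurableSet_Ioo _ (Or.inr measure_Ioo_lt_top.ne)
  · exact Eventually.of_forall fun p hp =>
      Set.indicator_of_notMem (fun hmem => hp (hS k hmem)) _
  · have := (Real.continuous_sqrt.tendsto' 0 0 Real.sqrt_zero).comp h_int
    simpa [wnorm, Function.comp_def] using this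


/-- with the more rapidly decreasing weight `w(p) = 1/(1 + p²)` on `ℝ`, the
constant function `1` belongs to `L²(ℝ, w dp)` and lies in `H_S ∩ H_T` for the disjoint
sets `S = (0,1)`, `T = (−1,0)`: spectral subspaces of disjoint sets can intersect
nontrivially for such weights. -/
theorem const_one_in_HS_and_HT :
    MemL2w (fun p => 1 / (1 + p ^ 2)) (fun _ => (1 : ℂ)) ∧
    MemHSw (fun p => 1 / (1 + p ^ 2)) (Set.Ioo 0 1) (fun _ => (1 : ℂ)) ∧
    MemHSw (fun p => 1 / (1 + p ^ 2)) (Set.Ioo (-1) 0) (fun _ => (1 : ℂ)) := by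
  refine ⟨memL2w_one, ?_, ?_⟩
  · exact memHSw_one (fun _ => 0) (fun k => 1 / (k + 1))
      (fun k => by positivity)
      tendsto_const_nhds tendsto_one_div_add_atTop_nhds_zero_nat _
      (fun k => Set.Ioo_subset_Ioo le_rfl (by
        rw [div_le_one (by positivity)]; exact le_add_of_nonneg_left (Nat.cast_nonneg k)))
  · exact memHSw_one (fun k => -(1 / (k + 1))) (fun _ => 0)
      (fun k => neg_lt_zero.2 (by positivity))
      (by simpa using (tendsto_one_div_add_atTop_nhds_zero_nat (𝕜 := ℝ)).neg)
      tendsto_const_nhds _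
      (fun k => Set.Ioo_subset_Ioo (by
        rw [neg_le_neg_iff]
        rw [div_le_one (by positivity)]
        exact le_add_of_nonneg_left (Nat.cast_nonneg k)) le_rfl)
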